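/- Let χ ∈ {−1,+1}ⁿ and let W₁, …, Wₜ be matrices where each Wᵢ is either the identity on the relevant coordinates or an averaging matrix W_{u,v} (replacing coordinates u and v by their average), and suppose exactly c of the edges (u,v) are 'cross edges', i.e., satisfy χ(u) ≠ χ(v). Then ‖Wₜ⋯W₁χ − χ‖² ≤ 4c. -/
import Mathlib

open Matrix Finset

/-- The matrix that replaces coordinates `u` and `v` of a vector by their average:
`W_{u,v} = I − (1/2)(e_u − e_v)(e_u − e_v)ᵀ`. -/
noncomputable def avgMatrix {n : ℕ} (u v : Fin n) : Matrix (Fin n) (Fin n) ℝ :=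
  1 - (2 : ℝ)⁻¹ • vecMulVec (Pi.single u 1 - Pi.single v 1) (Pi.single u 1 - Pi.single v 1)



lemma avg_apply {n : ℕ} (u v : Fin n) (y : Fin n → ℝ) (j : Fin n) :
    (avgMatrix u v).mulVec y j
      = y j - (2:ℝ)⁻¹ * ((Pi.single u 1 - Pi.single v 1 : Fin n → ℝ) j) * (y u - y v) := by
  simp [avgMatrix, mulVec, dotProduct, Matrix.sub_apply, Matrix.one_apply, vecMulVec_apply,
    sub_mul, mul_sub, Pi.sub_apply, Pi.single_apply, Finset.sum_sub_distrib, mul_comm,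
    Finset.sum_ite_eq', mul_assoc]
  split_ifs <;> subst_vars <;> ring

lemma avg_infty {n : ℕ} (u v : Fin n) (y : Fin n → ℝ) (hy : ∀ j, |y j| ≤ 1) (j : Fin n) :
    |(avgMatrix u v).mulVec y j| ≤ 1 := by
  rw [avg_apply]
  by_cases h3 : u = v
  · subst h3; simpa using hy j
  · by_cases h1 : j = u
    · subst h1
      have := hy j; have := hy v
      rw [Pi.sub_apply, Pi.single_eq_same, Pi.single_eq_of_ne h3]
      rw [abs_le] at *; constructor <;> [linarith; linarith]
    · by_cases h2 : j = v
      · subst h2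
        have := hy j; have := hy u
        rw [Pi.sub_apply, Pi.single_eq_of_ne h1, Pi.single_eq_same]
        rw [abs_le] at *; constructor <;> [linarith; linarith]
      · simpa [Pi.sub_apply, Pi.single_eq_of_ne h1, Pi.single_eq_of_ne h2]
          using hy j

lemma avg_inner {n : ℕ} (u v : Fin n) (chi y : Fin n → ℝ) :
    ∑ j, chi j * (avgMatrix u v).mulVec y j
      = ∑ j, chi j * y j - (2:ℝ)⁻¹ * (chi u - chi v) * (y u - y v) := by
  simp only [avg_apply, mul_sub, Finset.sum_sub_distrib]
  congr 1
  simp only [Pi.sub_apply, Pi.single_apply, mul_sub, sub_mul, mul_ite, mul_one, mul_zero,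
    ite_mul, zero_mul, Finset.sum_sub_distrib, Finset.sum_ite_eq', Finset.mem_univ, if_true]
  ring


/-- If `χ ∈ {−1,+1}ⁿ` and `x⁽ᵗ⁾` is obtained from `χ` by `t` averaging steps along edges
`e 0, …, e (t−1)`, of which exactly `c` are cross edges (`χ(u) ≠ χ(v)`), then
`‖Wₜ⋯W₁χ − χ‖² ≤ 4c`. -/
theorem stmt_11 {n t : ℕ} (chi : Fin n → ℝ) (hchi : ∀ j, chi j = 1 ∨ chi j = -1)
    (e : Fin t → Fin n × Fin n)
    (c : ℕ) (hc : c = (Finset.univ.filter (fun i : Fin t => chi (e i).1 ≠ chi (e i).2)).card)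
    (x : ℕ → Fin n → ℝ) (hx0 : x 0 = chi)
    (hxs : ∀ i : Fin t, x (i + 1) = (avgMatrix (e i).1 (e i).2).mulVec (x i)) :
    ∑ j, (x t j - chi j) ^ 2 ≤ 4 * c := by
  classical
  have habs : ∀ j, |chi j| = 1 := by
    intro j; rcases hchi j with h | h <;> simp [h]
  have key : ∀ i, i ≤ t → (∀ j, |x i j| ≤ 1) ∧
      (n : ℝ) - 2 * ((Finset.univ.filter
        (fun k : Fin t => (k : ℕ) < i ∧ chi (e k).1 ≠ chi (e k).2)).card : ℝ)
        ≤ ∑ j, chi j * x i j := by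
    intro i
    induction i with
    | zero =>
      intro _
      constructor
      · intro j; rw [hx0]; exact (habs j).le
      · have h1 : (Finset.univ.filter
            (fun k : Fin t => (k : ℕ) < 0 ∧ chi (e k).1 ≠ chi (e k).2)) = ∅ := by
          simp
        have h2 : ∑ j, chi j * x 0 j = n := by
          rw [hx0]
          have : ∀ j, chi j * chi j = 1 := by
            intro j; rcases hchi j with h | h <;> simp [h]
          simp [this]
        rw [h1, h2]; simp
    | succ i ih =>
      intro hi
      have hi' : i < t := hi
      obtain ⟨hb, hs⟩ := ih hi'.le
      have hx : x (i + 1) = (avgMatrix (e ⟨i, hi'⟩).1 (e ⟨i, hi'⟩).2).mulVec (x i) :=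
        hxs ⟨i, hi'⟩
      set u := (e ⟨i, hi'⟩).1 with hu
      set v := (e ⟨i, hi'⟩).2 with hv
      refine ⟨fun j => by rw [hx]; exact avg_infty u v (x i) hb j, ?_⟩
      have hsum : ∑ j, chi j * x (i + 1) j
          = ∑ j, chi j * x i j - (2:ℝ)⁻¹ * (chi u - chi v) * (x i u - x i v) := by
        rw [hx]; exact avg_inner u v chi (x i)
      by_cases hcross : chi u = chi v
      · -- internal edge: sum unchanged, card monotone
        have hmono : (Finset.univ.filter
              (fun k : Fin t => (k : ℕ) < i ∧ chi (e k).1 ≠ chi (e k).2)).card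
            ≤ (Finset.univ.filter
              (fun k : Fin t => (k : ℕ) < i + 1 ∧ chi (e k).1 ≠ chi (e k).2)).card := by
          apply Finset.card_le_card
          intro k hk
          simp only [Finset.mem_filter, Finset.mem_univ, true_and] at hk ⊢
          exact ⟨by omega, hk.2⟩
        have : (((Finset.univ.filter
              (fun k : Fin t => (k : ℕ) < i ∧ chi (e k).1 ≠ chi (e k).2)).card : ℕ) : ℝ)
            ≤ (((Finset.univ.filter
              (fun k : Fin t => (k : ℕ) < i + 1 ∧ chi (e k).1 ≠ chi (e k).2)).card : ℕ) : ℝ) := by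
          exact_mod_cast hmono
        rw [hsum, hcross]
        simp only [sub_self, mul_zero, zero_mul, sub_zero]
        linarith
      · -- cross edge
        have hterm : |(2:ℝ)⁻¹ * (chi u - chi v) * (x i u - x i v)| ≤ 2 := by
          have h1 : |chi u - chi v| ≤ 2 := by
            have := habs u; have := habs v
            rw [abs_le]; rw [abs_eq (by norm_num : (0:ℝ) ≤ 1)] at *
            rcases hchi u with h | h <;> rcases hchi v with h' | h' <;>
              rw [h, h'] <;> norm_num
          have h2 : |x i u - x i v| ≤ 2 := by
            have := hb u; have := hb v
            rw [abs_le] at *; constructor <;> linarith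
          calc |(2:ℝ)⁻¹ * (chi u - chi v) * (x i u - x i v)|
              = (2:ℝ)⁻¹ * |chi u - chi v| * |x i u - x i v| := by
                rw [abs_mul, abs_mul]; norm_num
            _ ≤ (2:ℝ)⁻¹ * 2 * 2 := by
                apply mul_le_mul _ h2 (abs_nonneg _) (by norm_num)
                apply mul_le_mul_of_nonneg_left h1 (by norm_num)
            _ = 2 := by norm_num
        have hcard : (Finset.univ.filter
              (fun k : Fin t => (k : ℕ) < i ∧ chi (e k).1 ≠ chi (e k).2)).card + 1
            ≤ (Finset.univ.filter
              (fun k : Fin t => (k : ℕ) < i + 1 ∧ chi (e k).1 ≠ chi (e k).2)).card := by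
          have hnot : (⟨i, hi'⟩ : Fin t) ∉ Finset.univ.filter
              (fun k : Fin t => (k : ℕ) < i ∧ chi (e k).1 ≠ chi (e k).2) := by
            simp
          have hsub : insert (⟨i, hi'⟩ : Fin t) (Finset.univ.filter
              (fun k : Fin t => (k : ℕ) < i ∧ chi (e k).1 ≠ chi (e k).2))
              ⊆ Finset.univ.filter
              (fun k : Fin t => (k : ℕ) < i + 1 ∧ chi (e k).1 ≠ chi (e k).2) := by
            intro k hk
            rcases Finset.mem_insert.mp hk with rfl | hk
            · simp only [Finset.mem_filter, Finset.mem_univ, true_and]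
              exact ⟨by omega, by rw [← hu, ← hv]; exact hcross⟩
            · simp only [Finset.mem_filter, Finset.mem_univ, true_and] at hk ⊢
              exact ⟨by omega, hk.2⟩
          calc _ = (insert (⟨i, hi'⟩ : Fin t) (Finset.univ.filter
                (fun k : Fin t => (k : ℕ) < i ∧ chi (e k).1 ≠ chi (e k).2))).card := by
                rw [Finset.card_insert_of_notMem hnot]
            _ ≤ _ := Finset.card_le_card hsub
        have hcardR : (((Finset.univ.filter
              (fun k : Fin t => (k : ℕ) < i ∧ chi (e k).1 ≠ chi (e k).2)).card : ℕ) : ℝ) + 1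
            ≤ (((Finset.univ.filter
              (fun k : Fin t => (k : ℕ) < i + 1 ∧ chi (e k).1 ≠ chi (e k).2)).card : ℕ) : ℝ) := by
          exact_mod_cast hcard
        rw [hsum]
        have := abs_le.mp hterm
        linarith
  obtain ⟨hb, hs⟩ := key t le_rfl
  have hct : (Finset.univ.filter
      (fun k : Fin t => (k : ℕ) < t ∧ chi (e k).1 ≠ chi (e k).2)).card ≤ c := by
    rw [hc]
    apply Finset.card_le_card
    intro k hk
    simp only [Finset.mem_filter, Finset.mem_univ, true_and] at hk ⊢
    exact hk.2
  have hctR : (((Finset.univ.filter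
      (fun k : Fin t => (k : ℕ) < t ∧ chi (e k).1 ≠ chi (e k).2)).card : ℕ) : ℝ) ≤ (c : ℝ) := by
    exact_mod_cast hct
  have hexp : ∑ j, (x t j - chi j) ^ 2
      = ∑ j, (x t j) ^ 2 - 2 * ∑ j, chi j * x t j + n := by
    have h1 : ∀ j, (x t j - chi j) ^ 2 = (x t j) ^ 2 - 2 * (chi j * x t j) + 1 := by
      intro j
      have : chi j ^ 2 = 1 := by rcases hchi j with h | h <;> simp [h]
      nlinarith [this]
    rw [Finset.sum_congr rfl (fun j _ => h1 j)]
    rw [Finset.sum_add_distrib, Finset.sum_sub_distrib, ← Finset.mul_sum]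
    simp
  have hsq : ∑ j, (x t j) ^ 2 ≤ n := by
    calc ∑ j, (x t j) ^ 2 ≤ ∑ _j : Fin n, (1:ℝ) := by
          apply Finset.sum_le_sum
          intro j _
          have := hb j
          nlinarith [abs_nonneg (x t j), sq_abs (x t j)]
      _ = n := by simp
  rw [hexp]
  linarith
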